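/- Let n be divisible by 6, ρ an n-qubit density matrix, and g, h distinct nontrivial elements of ℤ₂×ℤ₂; set T = T_{[1, n/6+1]}^{(g,h)}. If tr(ρT) = 0 and tr(ρ U(g) T) = 0 (vanishing twisted string order), then the winning probability P_n^{(Q)}(g,h|ρ) = tr(ρ O_{g,h}) is at most 13/16. Thus a state with nontrivial twisted string order is necessary to exceed the value 13/16. -/

import Mathlib

open Matrix Complex
open scoped ComplexOrder

noncomputable section

/-- The state space of `n` qubits, as functions on classical bit strings. -/
abbrev QState (n : ℕ) := (Fin n → Fin 2) → ℂ

/-- Operators on `n` qubits: `2^n × 2^n` complex matrices. -/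
abbrev Op (n : ℕ) := Matrix (Fin n → Fin 2) (Fin n → Fin 2) ℂ

/-- The single-qubit Pauli `X` matrix. -/
def Xmat : Matrix (Fin 2) (Fin 2) ℂ := !![0, 1; 1, 0]

/-- The single-qubit Pauli `Z` matrix. -/
def Zmat : Matrix (Fin 2) (Fin 2) ℂ := !![1, 0; 0, -1]

/-- Map a 1-based cyclic site label `j ∈ {1,…,n}` (taken mod `n`) to an index in `Fin n`. -/
def site (n : ℕ) [NeZero n] (j : ℕ) : Fin n :=
  ⟨(j + (n - 1)) % n, Nat.mod_lt _ (Nat.pos_of_ne_zero (NeZero.ne n))⟩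

/-- The operator acting as the single-qubit matrix `M` on qubit `i` and as identity elsewhere. -/
def onSite (n : ℕ) (i : Fin n) (M : Matrix (Fin 2) (Fin 2) ℂ) : Op n :=
  Matrix.of fun s t => (if ∀ k, k ≠ i → s k = t k then 1 else 0) * M (s i) (t i)

/-- Pauli `X` on (1-based, cyclic) site `j`. -/
def PX (n : ℕ) [NeZero n] (j : ℕ) : Op n := onSite n (site n j) Xmat

/-- Pauli `Z` on (1-based, cyclic) site `j`. -/
def PZ (n : ℕ) [NeZero n] (j : ℕ) : Op n := onSite n (site n j) Zmat

/-- The cyclic cluster stabilizer `K_j = Z_{j-1} X_j Z_{j+1}` (for `1 ≤ j ≤ n`). -/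
def Kstab (n : ℕ) [NeZero n] (j : ℕ) : Op n := PZ n (j - 1) * PX n j * PZ n (j + 1)

/-- The symmetry group `ℤ₂ × ℤ₂`. -/
abbrev G2 := ZMod 2 × ZMod 2

/-- The nontrivial element `x = (0,1)` of `ℤ₂ × ℤ₂`. -/
def gx : G2 := (0, 1)

/-- The nontrivial element `y = (1,0)` of `ℤ₂ × ℤ₂`. -/
def gy : G2 := (1, 0)

/-- The nontrivial element `z = (1,1)` of `ℤ₂ × ℤ₂`. -/
def gz : G2 := (1, 1)

/-- The global symmetry representation `U((a,b)) = ∏_{j odd} X_j^a ∏_{j even} X_j^b`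
on `n` qubits (`n` even), written as a product over the `n/2` two-site blocks. -/
def Usym (n : ℕ) [NeZero n] (g : G2) : Op n :=
  ((List.range (n / 2)).map
    (fun p => PX n (2 * p + 1) ^ g.1.val * PX n (2 * p + 2) ^ g.2.val)).prod

/-- Left boundary operator `V^L_p((a,b))`: `Z^b` on qubit `2p-1` and `X^b Z^a` on qubit `2p`. -/
def VL (n : ℕ) [NeZero n] (p : ℕ) (g : G2) : Op n :=
  PZ n (2 * p - 1) ^ g.2.val * (PX n (2 * p) ^ g.2.val * PZ n (2 * p) ^ g.1.val)

/-- Right boundary operator `V^R_p((a,b))`: `Z^b X^a` on qubit `2p-1` and `Z^a` on qubit `2p`. -/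
def VR (n : ℕ) [NeZero n] (p : ℕ) (g : G2) : Op n :=
  (PZ n (2 * p - 1) ^ g.2.val * PX n (2 * p - 1) ^ g.1.val) * PZ n (2 * p) ^ g.1.val

/-- Truncated symmetry `U_{[p,q]}((a,b)) = ∏_{r=p+1}^{q-1} X_{2r-1}^a X_{2r}^b`. -/
def Ustr (n : ℕ) [NeZero n] (p q : ℕ) (g : G2) : Op n :=
  ((List.range (q - (p + 1))).map
    (fun r => PX n (2 * (p + 1 + r) - 1) ^ g.1.val * PX n (2 * (p + 1 + r)) ^ g.2.val)).prod

/-- The string order parameter `S_{[p,q]}(g) = V^L_p(g) · U_{[p,q]}(g) · V^R_q(g)`. -/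
def SOPm (n : ℕ) [NeZero n] (p q : ℕ) (g : G2) : Op n :=
  VL n p g * Ustr n p q g * VR n q g

/-- The twisted string order parameter
`T_{[p,q]}^{(g,h)} = V^R_q(g) · U(h) · V^L_p(g) · U_{[p,q]}(g)`. -/
def TSOP (n : ℕ) [NeZero n] (p q : ℕ) (g h : G2) : Op n :=
  VR n q g * Usym n h * VL n p g * Ustr n p q g

/-- The triangle-game winning operator
`O_{g,h} = (1/32)(12·1 + 12 U(g) + U(h) + U(gh) − 3T − 3U(g)T)` with `T = T_{[1,n/6+1]}^{(g,h)}`. -/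
def Owin (n : ℕ) [NeZero n] (g h : G2) : Op n :=
  (32 : ℂ)⁻¹ • (12 • (1 : Op n) + 12 • Usym n g + Usym n h + Usym n (g + h)
    - 3 • TSOP n 1 (n / 6 + 1) g h - 3 • (Usym n g * TSOP n 1 (n / 6 + 1) g h))

/-- The `n`-fold tensor product `|+⟩^{⊗n}`, with all amplitudes `(1/√2)^n`. -/
def plusState (n : ℕ) : QState n := fun _ => (((Real.sqrt 2)⁻¹ : ℝ) : ℂ) ^ n

/-- The controlled-`Z` gate between (1-based, cyclic) sites `j` and `k`. -/
def CZm (n : ℕ) [NeZero n] (j k : ℕ) : Op n :=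
  Matrix.of fun s t =>
    if s = t then (if s (site n j) = 1 ∧ s (site n k) = 1 then -1 else 1) else 0

/-- The `n`-qubit cyclic cluster state `|C_n⟩ = (∏_{j=1}^n CZ_{j,j+1}) |+⟩^{⊗n}`. -/
def cluster (n : ℕ) [NeZero n] : QState n :=
  (((List.range n).map (fun j => CZm n (j + 1) (j + 2))).prod).mulVec (plusState n)

/-- Bit-flip permutation matrix: flips qubit `k` iff `w k = 1`. -/
def Mflip (n : ℕ) (w : Fin n → Fin 2) : Op n :=
  Matrix.of fun s t => if s = fun k => t k + w k then 1 else 0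

lemma fin2_add_add (a b : Fin 2) : a + b + b = a := by revert a b; decide

lemma fin2_add_self (a : Fin 2) : a + a = 0 := by revert a; decide

lemma Mflip_zero (n : ℕ) : Mflip n 0 = (1 : Op n) := by
  ext s t
  simp [Mflip, Matrix.one_apply, funext_iff, eq_comm]

lemma Mflip_mul (n : ℕ) (w w' : Fin n → Fin 2) :
    Mflip n w * Mflip n w' = Mflip n (w + w') := by
  ext s t
  simp only [Matrix.mul_apply, Mflip, Matrix.of_apply]
  rw [Finset.sum_eq_single (fun k => t k + w' k)]
  · have harr : (fun k => (t k + w' k) + w k) = fun k => t k + (w k + w' k) := by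
      funext k; rw [add_assoc, add_comm (w' k) (w k)]
    simp only [Pi.add_apply, harr, if_true, mul_one]
  · intro u _ hu
    rw [if_neg (fun h => hu h), mul_zero]
  · intro hmem; exact absurd (Finset.mem_univ _) hmem

lemma Mflip_conjTranspose (n : ℕ) (w : Fin n → Fin 2) : (Mflip n w)ᴴ = Mflip n w := by
  have hcond : ∀ s t : Fin n → Fin 2,
      (t = fun k => s k + w k) ↔ (s = fun k => t k + w k) := by
    intro s t
    constructor <;> rintro rfl <;> (funext k; simp only []; rw [fin2_add_add])
  ext s t
  rw [Matrix.conjTranspose_apply]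
  show star (Mflip n w t s) = Mflip n w s t
  simp only [Mflip, Matrix.of_apply, hcond s t, apply_ite, star_one, star_zero]
  split_ifs <;> rfl

lemma Mflip_sq (n : ℕ) (w : Fin n → Fin 2) : Mflip n w * Mflip n w = 1 := by
  rw [Mflip_mul]
  convert Mflip_zero n using 2
  funext k
  exact fin2_add_self _

lemma PX_eq_Mflip (n : ℕ) [NeZero n] (j : ℕ) :
    PX n j = Mflip n (fun k => if k = site n j then 1 else 0) := by
  ext s t
  simp only [PX, onSite, Mflip, Matrix.of_apply]
  have hX : ∀ a b : Fin 2, Xmat a b = if a = b + 1 then 1 else 0 := by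
    intro a b; fin_cases a <;> fin_cases b <;> simp [Xmat]
  rw [hX]
  have key : (s = fun k => t k + if k = site n j then 1 else 0) ↔
      ((∀ k, k ≠ site n j → s k = t k) ∧ s (site n j) = t (site n j) + 1) := by
    constructor
    · rintro rfl
      refine ⟨fun k hk => by simp [hk], by simp⟩
    · rintro ⟨h1, h2⟩
      funext k
      by_cases hk : k = site n j
      · subst hk; simpa using h2
      · simp [hk, h1 k hk]
  simp only [ite_zero_mul_ite_zero, one_mul, key]

lemma prod_Mflip {n : ℕ} (L : List (Op n)) (hL : ∀ A ∈ L, ∃ w, A = Mflip n w) :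
    ∃ w, L.prod = Mflip n w := by
  induction L with
  | nil => exact ⟨0, by simp [Mflip_zero]⟩
  | cons A L ih =>
    obtain ⟨w, hw⟩ := hL A (by simp)
    obtain ⟨w', hw'⟩ := ih (fun B hB => hL B (by simp [hB]))
    exact ⟨w + w', by simp [hw, hw', Mflip_mul]⟩

lemma PX_pow_Mflip (n : ℕ) [NeZero n] (j m : ℕ) : ∃ w, PX n j ^ m = Mflip n w := by
  induction m with
  | zero => exact ⟨0, by simp [Mflip_zero]⟩
  | succ m ih =>
    obtain ⟨w, hw⟩ := ih
    exact ⟨w + (fun k => if k = site n j then 1 else 0),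
      by rw [pow_succ, hw, PX_eq_Mflip, Mflip_mul]⟩

lemma Usym_Mflip (n : ℕ) [NeZero n] (g : G2) : ∃ w, Usym n g = Mflip n w := by
  apply prod_Mflip
  intro A hA
  simp only [List.mem_map] at hA
  obtain ⟨p, -, rfl⟩ := hA
  obtain ⟨w1, h1⟩ := PX_pow_Mflip n (2 * p + 1) g.1.val
  obtain ⟨w2, h2⟩ := PX_pow_Mflip n (2 * p + 2) g.2.val
  exact ⟨w1 + w2, by rw [h1, h2, Mflip_mul]⟩

lemma psd_diag_nonneg {m : Type*} [Fintype m] [DecidableEq m] {M : Matrix m m ℂ}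
    (hM : M.PosSemidef) (i : m) : 0 ≤ M i i := by
  have := hM.dotProduct_mulVec_nonneg (Pi.single i 1)
  simpa [dotProduct, Pi.single_apply, apply_ite] using this

lemma psd_trace_re_nonneg {m : Type*} [Fintype m] [DecidableEq m] {M : Matrix m m ℂ}
    (hM : M.PosSemidef) : 0 ≤ M.trace.re := by
  rw [Matrix.trace, Complex.re_sum]
  exact Finset.sum_nonneg fun i _ => ((Complex.le_def.mp (psd_diag_nonneg hM i)).1)

lemma usym_bound (n : ℕ) [NeZero n] (ρ : Op n) (hρ : ρ.PosSemidef) (htr : ρ.trace = 1)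
    (g : G2) : ((ρ * Usym n g).trace).re ≤ 1 := by
  obtain ⟨w, hw⟩ := Usym_Mflip n g
  set U := Usym n g with hU
  have hherm : Uᴴ = U := by rw [hw]; exact Mflip_conjTranspose n w
  have hsq : U * U = 1 := by rw [hw]; exact Mflip_sq n w
  set C : Op n := 1 - U with hC
  have hCC : Cᴴ * C = (2 : ℂ) • (1 - U) := by
    rw [hC, conjTranspose_sub, conjTranspose_one, hherm, sub_mul, mul_sub, mul_sub,
      hsq, one_mul, mul_one]
    ext s t
    simp [Matrix.sub_apply, Matrix.smul_apply, smul_eq_mul]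
    ring
  have hpsd : (C * ρ * Cᴴ).PosSemidef := hρ.mul_mul_conjTranspose_same C
  have hcyc : (ρ * (Cᴴ * C)).trace = (C * ρ * Cᴴ).trace := by
    rw [← mul_assoc, Matrix.trace_mul_cycle]
  have key : 0 ≤ ((ρ * ((2:ℂ) • (1 - U))).trace).re := by
    rw [← hCC, hcyc]
    exact psd_trace_re_nonneg hpsd
  have expand : (ρ * ((2:ℂ) • (1 - U))).trace = 2 * (1 - (ρ * U).trace) := by
    rw [mul_smul_comm, Matrix.trace_smul, mul_sub, Matrix.trace_sub, mul_one, htr,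
      smul_eq_mul]
  rw [expand] at key
  have : (2 * (1 - (ρ * U).trace)).re = 2 * (1 - ((ρ * U).trace).re) := by
    simp [Complex.mul_re, Complex.sub_re]
  rw [this] at key
  linarith

/-- If the twisted string order vanishes, `tr(ρT) = tr(ρU(g)T) = 0`, then the triangle-game
winning probability `P_n^{(Q)}(g,h|ρ) = tr(ρ O_{g,h})` is at most `13/16`: a state with
nontrivial twisted string order is necessary to exceed `13/16`. -/
theorem vanishing_twisted_SOP_bound (n : ℕ) [NeZero n] (hn : 6 ∣ n)
    (ρ : Op n) (hρ : ρ.PosSemidef) (htr : ρ.trace = 1)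
    (g h : G2) (hg : g ≠ 0) (hh : h ≠ 0) (hgh : g ≠ h)
    (hT : (ρ * TSOP n 1 (n / 6 + 1) g h).trace = 0)
    (hUT : (ρ * (Usym n g * TSOP n 1 (n / 6 + 1) g h)).trace = 0) :
    ((ρ * Owin n g h).trace).re ≤ 13 / 16 := by
  have hb1 := usym_bound n ρ hρ htr g
  have hb2 := usym_bound n ρ hρ htr h
  have hb3 := usym_bound n ρ hρ htr (g + h)
  have expand : (ρ * Owin n g h).trace
      = (32 : ℂ)⁻¹ * (12 + 12 * (ρ * Usym n g).trace + (ρ * Usym n h).trace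
        + (ρ * Usym n (g + h)).trace) := by
    simp only [Owin, Matrix.mul_smul, mul_add, mul_sub, Matrix.trace_add,
      Matrix.trace_sub, Matrix.trace_smul, mul_one, htr, hT, hUT, smul_zero,
      smul_eq_mul]
    simp only [nsmul_eq_mul, Nat.cast_ofNat, smul_eq_mul]
    ring
  rw [expand, show (32 : ℂ)⁻¹ = ((32⁻¹ : ℝ) : ℂ) by norm_num, Complex.re_ofReal_mul]
  have hre : (12 + 12 * (ρ * Usym n g).trace + (ρ * Usym n h).trace
      + (ρ * Usym n (g + h)).trace).re
      = 12 + 12 * ((ρ * Usym n g).trace).re + ((ρ * Usym n h).trace).re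
        + ((ρ * Usym n (g + h)).trace).re := by
    simp [Complex.add_re, Complex.mul_re]
  rw [hre]
  nlinarith [hb1, hb2, hb3]
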